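/- Let P, Q be modules over a commutative unital 𝕜-algebra A and k ≥ 0. Then j_k : P → 𝒥^k(P) is a differential operator of order ≤ k over A, and for every differential operator Δ : P → Q of order ≤ k there exists a unique A-linear map ψ^Δ : 𝒥^k(P) → Q with Δ = ψ^Δ ∘ j_k. The correspondence Δ ↦ ψ^Δ is an isomorphism of A-modules Diff_k(P,Q) ≅ Hom_A(𝒥^k(P), Q), where Diff_k(P,Q) carries the action (a·Δ)(p) = a·Δ(p); i.e., 𝒥^k(P) is a representative object for the functor Q ↦ Diff_k(P,Q). -/
import Mathlib
/-- `dop A a f = δ_a(f)`, where `δ_a(f)(p) = f (a • p) - a • f p`. -/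
def dop (A : Type*) [CommRing A] {M N : Type*} [AddCommGroup M] [Module A M]
    [AddCommGroup N] [Module A N] (a : A) (f : M → N) : M → N :=
  fun p => f (a • p) - a • f p

/-- `IsDiffOp A k f` : `f` is a differential operator of order at most `k` over `A`,
i.e. `δ_{a₀}(δ_{a₁}(⋯ δ_{a_k}(f) ⋯)) = 0` for all `a₀, …, a_k ∈ A`. -/
def IsDiffOp (A : Type*) [CommRing A] {M N : Type*} [AddCommGroup M] [Module A M]
    [AddCommGroup N] [Module A N] : ℕ → (M → N) → Prop
  | 0, f => ∀ a : A, dop A a f = 0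
  | k + 1, f => ∀ a : A, IsDiffOp A k (dop A a f)

open scoped TensorProduct

section
variable (𝕜 : Type*) [Field 𝕜] (A : Type*) [CommRing A] [Algebra 𝕜 A]
variable (P : Type*) [AddCommGroup P] [Module 𝕜 P] [Module A P] [IsScalarTower 𝕜 A P]

/-- `ε : P → A ⊗_𝕜 P`,  `ε(p) = 1 ⊗ p`. -/
noncomputable def epsFun : P → A ⊗[𝕜] P := fun p => (1 : A) ⊗ₜ[𝕜] p

/-- The submodule `μ^k ⊆ A ⊗_𝕜 P` generated by all `δ_{a₀}(δ_{a₁}(⋯ δ_{a_k}(ε)⋯))(p)`. -/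
def muSub (k : ℕ) : Submodule A (A ⊗[𝕜] P) :=
  Submodule.span A
    {x | ∃ (v : Fin (k + 1) → A) (p : P), ((List.ofFn v).foldr (dop A) (epsFun 𝕜 A P)) p = x}

/-- The module of `k`-jets `𝒥^k(P) = (A ⊗_𝕜 P) / μ^k`. -/
abbrev JetMod (k : ℕ) := (A ⊗[𝕜] P) ⧸ muSub 𝕜 A P k

/-- The operator `j_k : P → 𝒥^k(P)`,  `j_k(p) = [1 ⊗ p]`. -/
noncomputable def jetMap (k : ℕ) : P → JetMod 𝕜 A P k :=
  fun p => Submodule.Quotient.mk (epsFun 𝕜 A P p)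

end

section Aux
variable {A : Type*} [CommRing A] {M N R : Type*} [AddCommGroup M] [Module A M]
    [AddCommGroup N] [Module A N] [AddCommGroup R] [Module A R]

lemma dop_comp_left (g : N →ₗ[A] R) (f : M → N) (a : A) :
    dop A a (⇑g ∘ f) = ⇑g ∘ dop A a f := by
  funext p; simp [dop, map_sub, map_smul]

lemma foldr_dop_comp_left (g : N →ₗ[A] R) (f : M → N) (l : List A) :
    l.foldr (dop A) (⇑g ∘ f) = ⇑g ∘ l.foldr (dop A) f := by
  induction l with
  | nil => rfl
  | cons a l ih => simp [List.foldr_cons, ih, dop_comp_left]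

lemma isDiffOp_iff (k : ℕ) (f : M → N) :
    IsDiffOp A k f ↔ ∀ v : Fin (k + 1) → A, (List.ofFn v).foldr (dop A) f = 0 := by
  induction k generalizing f with
  | zero =>
    show (∀ a : A, dop A a f = 0) ↔ _
    constructor
    · intro h v; simpa using h (v 0)
    · intro h a; simpa using h ![a]
  | succ k ih =>
    show (∀ a : A, IsDiffOp A k (dop A a f)) ↔ _
    constructor
    · intro h v
      have := (ih (dop A (v (Fin.last _)) f)).1 (h _) (fun i => v i.castSucc)
      rw [List.ofFn_succ', List.concat_eq_append, List.foldr_append]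
      simpa using this
    · intro h a
      refine (ih _).2 fun v => ?_
      have := h (Fin.snoc v a)
      rw [List.ofFn_succ', List.concat_eq_append, List.foldr_append] at this
      simpa using this
end Aux

section Jet
variable (𝕜 : Type*) [Field 𝕜] (A : Type*) [CommRing A] [Algebra 𝕜 A]
variable (P : Type*) [AddCommGroup P] [Module 𝕜 P] [Module A P] [IsScalarTower 𝕜 A P]

omit [IsScalarTower 𝕜 A P] in
lemma jetMap_eq (k : ℕ) :
    jetMap 𝕜 A P k = ⇑(muSub 𝕜 A P k).mkQ ∘ epsFun 𝕜 A P := rfl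

omit [IsScalarTower 𝕜 A P] in
lemma foldr_dop_jetMap (k : ℕ) (v : Fin (k + 1) → A) :
    (List.ofFn v).foldr (dop A) (jetMap 𝕜 A P k) = 0 := by
  rw [jetMap_eq, foldr_dop_comp_left]
  funext p
  simp only [Function.comp_apply, Pi.zero_apply, Submodule.mkQ_apply,
    Submodule.Quotient.mk_eq_zero]
  exact Submodule.subset_span ⟨v, p, rfl⟩

omit [IsScalarTower 𝕜 A P] in
lemma isDiffOp_jetMap (k : ℕ) : IsDiffOp A k (jetMap 𝕜 A P k) :=
  (isDiffOp_iff k _).2 (foldr_dop_jetMap 𝕜 A P k)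

end Jet
/-- `j_k : P → 𝒥^k(P)` is a (`𝕜`-linear) differential operator of
order `≤ k` over `A`; every differential operator `Δ : P → Q` of order `≤ k` factors
uniquely as `Δ = ψ^Δ ∘ j_k` with `ψ^Δ : 𝒥^k(P) → Q` `A`-linear; and `ψ ↦ ψ ∘ j_k` is an
isomorphism of `A`-modules `Hom_A(𝒥^k(P), Q) ≅ Diff_k(P,Q)` (with `(a • Δ)(p) = a • Δ p`
on the right), i.e. `𝒥^k(P)` represents the functor `Q ↦ Diff_k(P,Q)`. -/
theorem jet_module_represents_diff
    (𝕜 : Type*) [Field 𝕜] (A : Type*) [CommRing A] [Algebra 𝕜 A]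
    (P Q : Type*)
    [AddCommGroup P] [Module 𝕜 P] [Module A P] [IsScalarTower 𝕜 A P]
    [AddCommGroup Q] [Module 𝕜 Q] [Module A Q] [IsScalarTower 𝕜 A Q]
    (k : ℕ) :
    -- j_k is a 𝕜-linear differential operator of order ≤ k
    (IsLinearMap 𝕜 (jetMap 𝕜 A P k) ∧ IsDiffOp A k (jetMap 𝕜 A P k)) ∧
    -- universal property: unique A-linear factorization of operators of order ≤ k
    (∀ Δ : P →ₗ[𝕜] Q, IsDiffOp A k ⇑Δ →
        ∃! ψ : JetMod 𝕜 A P k →ₗ[A] Q, ⇑Δ = ⇑ψ ∘ jetMap 𝕜 A P k) ∧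
    -- ψ ↦ ψ ∘ j_k lands in Diff_k(P,Q) …
    (∀ ψ : JetMod 𝕜 A P k →ₗ[A] Q,
        IsLinearMap 𝕜 (⇑ψ ∘ jetMap 𝕜 A P k) ∧ IsDiffOp A k (⇑ψ ∘ jetMap 𝕜 A P k)) ∧
    -- … and is an A-module homomorphism (bijectivity follows from the two items above)
    (∀ ψ ψ' : JetMod 𝕜 A P k →ₗ[A] Q,
        ⇑(ψ + ψ') ∘ jetMap 𝕜 A P k = ⇑ψ ∘ jetMap 𝕜 A P k + ⇑ψ' ∘ jetMap 𝕜 A P k) ∧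
    (∀ (a : A) (ψ : JetMod 𝕜 A P k →ₗ[A] Q),
        ⇑(a • ψ) ∘ jetMap 𝕜 A P k = a • (⇑ψ ∘ jetMap 𝕜 A P k)) := by
  classical
  -- uniqueness helper
  have huniq : ∀ ψ ψ' : JetMod 𝕜 A P k →ₗ[A] Q,
      ⇑ψ ∘ jetMap 𝕜 A P k = ⇑ψ' ∘ jetMap 𝕜 A P k → ψ = ψ' := by
    intro ψ ψ' h
    refine Submodule.linearMap_qext _ (LinearMap.ext fun x => ?_)
    induction x using TensorProduct.induction_on with
    | zero => simp
    | tmul a p =>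
      have hx : a ⊗ₜ[𝕜] p = a • ((1 : A) ⊗ₜ[𝕜] p) := by
        rw [TensorProduct.smul_tmul', smul_eq_mul, mul_one]
      have hp := congrFun h p
      simp only [Function.comp_apply, jetMap, epsFun] at hp
      simp only [LinearMap.comp_apply, Submodule.mkQ_apply, hx,
        Submodule.Quotient.mk_smul, map_smul, hp]
    | add x y hx hy => simp only [map_add, hx, hy]
  refine ⟨⟨?_, isDiffOp_jetMap 𝕜 A P k⟩, ?_, ?_, ?_, ?_⟩
  · constructor
    · intro p q
      simp [jetMap, epsFun, TensorProduct.tmul_add, Submodule.Quotient.mk_add]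
    · intro c p
      show Submodule.Quotient.mk ((1:A) ⊗ₜ[𝕜] (c • p))
          = c • (Submodule.Quotient.mk ((1:A) ⊗ₜ[𝕜] p) : JetMod 𝕜 A P k)
      rw [TensorProduct.tmul_smul]
      exact Submodule.Quotient.mk_smul _ c _
  · intro Δ hΔ
    set Φ : A ⊗[𝕜] P →ₗ[A] Q := LinearMap.liftBaseChange A Δ with hΦ
    have hΦε : ⇑Φ ∘ epsFun 𝕜 A P = ⇑Δ := by
      funext p; simp [hΦ, epsFun]
    have hker : muSub 𝕜 A P k ≤ LinearMap.ker Φ := by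
      rw [muSub, Submodule.span_le]
      rintro x ⟨v, p, rfl⟩
      have hc : ⇑Φ ∘ (List.ofFn v).foldr (dop A) (epsFun 𝕜 A P)
          = (List.ofFn v).foldr (dop A) ⇑Δ := by
        rw [← foldr_dop_comp_left, hΦε]
      have h0 := (isDiffOp_iff k ⇑Δ).1 hΔ v
      have hcp := congrFun hc p
      simp only [Function.comp_apply] at hcp
      rw [SetLike.mem_coe, LinearMap.mem_ker, hcp, h0]
      rfl
    refine ⟨(muSub 𝕜 A P k).liftQ Φ hker, ?_, fun ψ hψ => ?_⟩
    · funext p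
      simp [jetMap, epsFun, hΦ]
    · refine huniq _ _ ?_
      rw [← hψ]
      funext p
      simp [jetMap, epsFun, hΦ]
  · intro ψ
    constructor
    · constructor
      · intro p q
        simp [jetMap, epsFun, TensorProduct.tmul_add, Submodule.Quotient.mk_add, map_add]
      · intro c p
        show ψ (Submodule.Quotient.mk ((1:A) ⊗ₜ[𝕜] (c • p)))
            = c • ψ (Submodule.Quotient.mk ((1:A) ⊗ₜ[𝕜] p))
        rw [TensorProduct.tmul_smul, Submodule.Quotient.mk_smul,
          LinearMap.map_smul_of_tower]
    · refine (isDiffOp_iff k _).2 fun v => ?_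
      rw [foldr_dop_comp_left, foldr_dop_jetMap]
      funext p; simp
  · intro ψ ψ'; funext p; simp
  · intro a ψ; funext p; simp
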